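/- The Takagi function T(x) = Σ_{n=0}^∞ 2^{-n} dist(2ⁿx, ℤ) has infinite total variation on every nondegenerate subinterval [a,b] of [0,1]. -/

import Mathlib

/-- The Takagi function `T(x) = Σ 2^{-n} dist(2ⁿ x, ℤ)`. -/
noncomputable def takagi (x : ℝ) : ℝ :=
  ∑' n : ℕ, (2:ℝ)⁻¹ ^ n * |2 ^ n * x - round (2 ^ n * x)|

namespace TakagiAux

noncomputable def phi (x : ℝ) : ℝ := |x - round x|

lemma takagi_eq (x : ℝ) : takagi x = ∑' n : ℕ, (2:ℝ)⁻¹ ^ n * phi (2 ^ n * x) := rfl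

lemma phi_int_add (x : ℝ) (m : ℤ) : phi (m + x) = phi x := by
  unfold phi; rw [round_intCast_add]; push_cast; ring_nf

lemma phi_intCast (m : ℤ) : phi m = 0 := by
  unfold phi; rw [round_intCast, sub_self, abs_zero]

lemma phi_of_mem_Icc {y : ℝ} (h0 : 0 ≤ y) (h1 : y ≤ 1) : phi y = min y (1 - y) := by
  rcases eq_or_lt_of_le h1 with rfl | h1
  · simp [phi]
  · unfold phi
    rw [abs_sub_round_eq_min, Int.fract_eq_self.mpr ⟨h0, h1⟩]

/-- Sign of the increment of `dist(·,ℤ)` between consecutive dyadics at scale `M`. -/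
def S (k : ℤ) (M : ℕ) : ℤ := if 2 * (k % 2 ^ M) < 2 ^ M then 1 else -1

lemma abs_S (k : ℤ) (M : ℕ) : |S k M| = 1 := by
  unfold S; split <;> norm_num

lemma phi_succ_sub (k : ℤ) (M : ℕ) (hM : 1 ≤ M) :
    phi (((k : ℝ) + 1) / 2 ^ M) - phi ((k : ℝ) / 2 ^ M) = (S k M : ℝ) / 2 ^ M := by
  set r : ℤ := k % 2 ^ M with hr
  have h2M : (0:ℤ) < 2 ^ M := by positivity
  have hr0 : 0 ≤ r := Int.emod_nonneg k (ne_of_gt h2M)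
  have hrlt : r < 2 ^ M := Int.emod_lt_of_pos k h2M
  have hq : (2:ℤ) ^ M * (k / 2 ^ M) + r = k := Int.mul_ediv_add_emod k (2 ^ M)
  set q : ℤ := k / 2 ^ M with hqdef
  have hpos : (0:ℝ) < 2 ^ M := by positivity
  have hk1 : (k : ℝ) / 2 ^ M = q + (r : ℝ) / 2 ^ M := by
    field_simp
    push_cast [← hq]
    ring
  have hk2 : ((k : ℝ) + 1) / 2 ^ M = q + ((r : ℝ) + 1) / 2 ^ M := by
    field_simp
    push_cast [← hq]
    ring
  rw [hk1, hk2, phi_int_add, phi_int_add]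
  have heven : (2:ℤ) ^ M = 2 * 2 ^ (M - 1) := by
    rw [← pow_succ']
    congr 1
    omega
  have hb1 : (0:ℝ) ≤ (r:ℝ) / 2 ^ M := by positivity
  have hb2 : (r:ℝ) / 2 ^ M ≤ 1 := by
    rw [div_le_one hpos]; exact_mod_cast hrlt.le
  have hb3 : (0:ℝ) ≤ ((r:ℝ) + 1) / 2 ^ M := by positivity
  have hb4 : ((r:ℝ) + 1) / 2 ^ M ≤ 1 := by
    rw [div_le_one hpos]
    have : r + 1 ≤ 2 ^ M := hrlt
    exact_mod_cast this
  rw [phi_of_mem_Icc hb1 hb2, phi_of_mem_Icc hb3 hb4]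
  unfold S
  rw [← hr]
  have key1 : ∀ s : ℤ, 2 * s ≤ 2 ^ M → (s:ℝ) / 2 ^ M ≤ 1 - (s:ℝ) / 2 ^ M := by
    intro s hs
    have h1 : ((s:ℝ) + (s:ℝ)) / 2 ^ M ≤ 1 := by
      rw [div_le_one hpos]
      have : s + s ≤ 2 ^ M := by omega
      exact_mod_cast this
    rw [add_div] at h1
    linarith
  have key2 : ∀ s : ℤ, 2 ^ M ≤ 2 * s → 1 - (s:ℝ) / 2 ^ M ≤ (s:ℝ) / 2 ^ M := by
    intro s hs
    have h1 : (1:ℝ) ≤ ((s:ℝ) + (s:ℝ)) / 2 ^ M := by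
      rw [le_div_iff₀ hpos, one_mul]
      have : 2 ^ M ≤ s + s := by omega
      exact_mod_cast this
    rw [add_div] at h1
    linarith
  split
  · next h =>
    have h2 : 2 * (r + 1) ≤ 2 ^ M := by omega
    have e1 := key1 r h.le
    have e2 := key1 (r + 1) h2
    push_cast at e2
    rw [min_eq_left e1, min_eq_left e2]
    push_cast
    ring
  · next h =>
    have h' : 2 ^ M ≤ 2 * r := by omega
    have e1 := key2 r h'
    have e2 := key2 (r + 1) (by omega)
    push_cast at e2
    rw [min_eq_right e1, min_eq_right e2]
    push_cast
    ring

lemma S_refine (k b : ℤ) (hb0 : 0 ≤ b) (hb1 : b ≤ 1) (M : ℕ) (hM : 1 ≤ M) :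
    S (2 * k + b) (M + 1) = S k M := by
  have h2M : (0:ℤ) < 2 ^ M := by positivity
  set r : ℤ := k % 2 ^ M with hr
  have hr0 : 0 ≤ r := Int.emod_nonneg k (ne_of_gt h2M)
  have hrlt : r < 2 ^ M := Int.emod_lt_of_pos k h2M
  have hq : (2:ℤ) ^ M * (k / 2 ^ M) + r = k := Int.mul_ediv_add_emod k (2 ^ M)
  have hmod : (2 * k + b) % 2 ^ (M + 1) = 2 * r + b := by
    have h1 : 2 * k + b = 2 * r + b + 2 ^ (M + 1) * (k / 2 ^ M) := by
      rw [pow_succ']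
      linarith [hq]
    rw [h1, Int.add_mul_emod_self_left]
    apply Int.emod_eq_of_lt (by omega)
    have : (2:ℤ) ^ (M + 1) = 2 * 2 ^ M := by rw [pow_succ']
    omega
  have heven : (2:ℤ) ^ M = 2 * 2 ^ (M - 1) := by
    rw [← pow_succ']; congr 1; omega
  have h2M1 : (2:ℤ) ^ (M + 1) = 2 * 2 ^ M := by rw [pow_succ']
  unfold S
  rw [hmod, ← hr]
  have : (2 * (2 * r + b) < 2 ^ (M + 1)) ↔ (2 * r < 2 ^ M) := by omega
  simp only [this]

lemma pow_mul_div (k : ℤ) (n N : ℕ) (h : n ≤ N) :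
    (2:ℝ) ^ n * ((k : ℝ) / 2 ^ N) = (k : ℝ) / 2 ^ (N - n) := by
  have hp : (2:ℝ) ^ n * 2 ^ (N - n) = 2 ^ N := by
    rw [← pow_add]; congr 1; omega
  field_simp
  linear_combination (k : ℝ) * hp

lemma takagi_dyadic (k : ℤ) (N : ℕ) :
    takagi ((k : ℝ) / 2 ^ N) =
      ∑ n ∈ Finset.range N, (2:ℝ)⁻¹ ^ n * phi ((k : ℝ) / 2 ^ (N - n)) := by
  rw [takagi_eq]
  rw [tsum_eq_sum (s := Finset.range N) ?_]
  · exact Finset.sum_congr rfl fun n hn => by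
      rw [pow_mul_div k n N (Finset.mem_range.mp hn).le]
  · intro n hn
    have hn' : N ≤ n := by simpa using hn
    have : (2:ℝ) ^ n * ((k : ℝ) / 2 ^ N) = ((k * 2 ^ (n - N) : ℤ) : ℝ) := by
      have hp : (2:ℝ) ^ N * 2 ^ (n - N) = 2 ^ n := by
        rw [← pow_add]; congr 1; omega
      push_cast
      rw [← hp]
      field_simp
    rw [this, phi_intCast, mul_zero]

lemma takagi_succ_sub (k : ℤ) (N : ℕ) :
    takagi (((k : ℝ) + 1) / 2 ^ N) - takagi ((k : ℝ) / 2 ^ N)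
      = (∑ n ∈ Finset.range N, (S k (N - n) : ℝ)) / 2 ^ N := by
  have h1 := takagi_dyadic (k + 1) N
  push_cast at h1
  rw [h1, takagi_dyadic k N, ← Finset.sum_sub_distrib, Finset.sum_div]
  apply Finset.sum_congr rfl
  intro n hn
  have hn' := Finset.mem_range.mp hn
  rw [← mul_sub, phi_succ_sub k (N - n) (by omega)]
  have hp : (2:ℝ) ^ n * 2 ^ (N - n) = 2 ^ N := by
    rw [← pow_add]; congr 1; omega
  rw [inv_pow, ← hp]
  field_simp

/-- The integer `2^N · (T((⌊2^N x⌋+1)/2^N) - T(⌊2^N x⌋/2^N))`. -/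
noncomputable def Dx (x : ℝ) (N : ℕ) : ℤ := ∑ n ∈ Finset.range N, S ⌊2 ^ N * x⌋ (N - n)

lemma takagi_Dx (x : ℝ) (N : ℕ) :
    takagi (((⌊2 ^ N * x⌋ : ℤ) : ℝ) / 2 ^ N + (2 ^ N)⁻¹)
        - takagi (((⌊2 ^ N * x⌋ : ℤ) : ℝ) / 2 ^ N)
      = (Dx x N : ℝ) / 2 ^ N := by
  have h : ((⌊2 ^ N * x⌋ : ℤ) : ℝ) / 2 ^ N + (2 ^ N)⁻¹
      = (((⌊2 ^ N * x⌋ : ℤ) : ℝ) + 1) / 2 ^ N := by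
    field_simp
  rw [h, takagi_succ_sub]
  congr 1
  rw [Dx, Int.cast_sum]

lemma floor_twice (x : ℝ) (N : ℕ) :
    2 * ⌊2 ^ N * x⌋ ≤ ⌊2 ^ (N + 1) * x⌋ ∧ ⌊2 ^ (N + 1) * x⌋ < 2 * ⌊2 ^ N * x⌋ + 2 := by
  have h2 : (2:ℝ) ^ (N + 1) = 2 * 2 ^ N := by rw [pow_succ']
  have hle := Int.floor_le (2 ^ N * x)
  have hlt := Int.lt_floor_add_one (2 ^ N * x)
  constructor
  · apply Int.le_floor.mpr
    push_cast
    rw [h2]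
    nlinarith
  · apply Int.floor_lt.mpr
    push_cast
    rw [h2]
    nlinarith

lemma Dx_succ (x : ℝ) (N : ℕ) :
    Dx x (N + 1) = Dx x N + S ⌊2 ^ (N + 1) * x⌋ 1 := by
  obtain ⟨hk1, hk2⟩ := floor_twice x N
  unfold Dx
  set k := ⌊2 ^ N * x⌋ with hkdef
  set k' := ⌊2 ^ (N + 1) * x⌋ with hk'def
  rw [Finset.sum_range_succ]
  congr 1
  · apply Finset.sum_congr rfl
    intro n hn
    have hn' := Finset.mem_range.mp hn
    have hM : N + 1 - n = (N - n) + 1 := by omega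
    have hk' : k' = 2 * k + (k' - 2 * k) := by ring
    rw [hM, hk', S_refine k (k' - 2 * k) (by omega) (by omega) (N - n) (by omega)]
  · congr 1
    omega

lemma abs_Dx_succ_sub (x : ℝ) (N : ℕ) : |(Dx x (N + 1) : ℝ) - Dx x N| = 1 := by
  rw [Dx_succ]
  push_cast
  rw [add_sub_cancel_left]
  exact_mod_cast abs_S ⌊2 ^ (N + 1) * x⌋ 1

lemma key_bound (x c : ℝ) {δ : ℝ}
    (hB : ∀ y : ℝ, dist y x < δ →
      ‖takagi y - takagi x - (y - x) • c‖ ≤ 4⁻¹ * ‖y - x‖)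
    (N : ℕ) (hN : ((2:ℝ) ^ N)⁻¹ < δ) : |(Dx x N : ℝ) - c| ≤ 4⁻¹ := by
  have h2 : (0:ℝ) < 2 ^ N := by positivity
  have hinv : (0:ℝ) < ((2:ℝ) ^ N)⁻¹ := by positivity
  set k := ⌊2 ^ N * x⌋ with hk
  set u : ℝ := ((k : ℤ) : ℝ) / 2 ^ N with hu
  set v : ℝ := u + (2 ^ N)⁻¹ with hv
  have hf1 : ((k : ℤ) : ℝ) ≤ 2 ^ N * x := Int.floor_le _
  have hf2 : 2 ^ N * x < ((k : ℤ) : ℝ) + 1 := Int.lt_floor_add_one _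
  have hux : u ≤ x := by
    rw [hu, div_le_iff₀ h2]; linarith
  have hdiff : (((k : ℤ) : ℝ) + 1) / 2 ^ N - ((k : ℤ) : ℝ) / 2 ^ N = (2 ^ N)⁻¹ := by
    field_simp
    ring
  have hxlt : x < (((k : ℤ) : ℝ) + 1) / 2 ^ N := by
    rw [lt_div_iff₀ h2]; linarith
  have hxu : x - u < (2 ^ N)⁻¹ := by
    rw [hu]; linarith
  have hxv : x < v := by
    rw [hv]; linarith
  have hdu : dist u x < δ := by
    rw [Real.dist_eq, abs_of_nonpos (by linarith)]
    linarith
  have hdv : dist v x < δ := by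
    rw [Real.dist_eq, abs_of_nonneg (by linarith)]
    have hvx : v - x ≤ (2 ^ N)⁻¹ := by rw [hv]; linarith
    exact lt_of_le_of_lt hvx hN
  have hBu := hB u hdu
  have hBv := hB v hdv
  rw [Real.norm_eq_abs, Real.norm_eq_abs, smul_eq_mul] at hBu hBv
  have hTv : takagi v - takagi u = (Dx x N : ℝ) / 2 ^ N := takagi_Dx x N
  have est : |takagi v - takagi u - (v - u) * c| ≤ 4⁻¹ * (2 ^ N)⁻¹ := by
    have e : takagi v - takagi u - (v - u) * c
        = (takagi v - takagi x - (v - x) * c) - (takagi u - takagi x - (u - x) * c) := by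
      ring
    rw [e]
    have habs : |(takagi v - takagi x - (v - x) * c) - (takagi u - takagi x - (u - x) * c)|
        ≤ |takagi v - takagi x - (v - x) * c| + |takagi u - takagi x - (u - x) * c| := by
      rw [sub_eq_add_neg]
      refine (abs_add_le _ _).trans ?_
      rw [abs_neg]
    have h3 : |v - x| = v - x := abs_of_nonneg (by linarith)
    have h4 : |u - x| = x - u := by rw [abs_sub_comm]; exact abs_of_nonneg (by linarith)
    have h5 : v - x + (x - u) = (2 ^ N)⁻¹ := by rw [hv]; ring
    calc |(takagi v - takagi x - (v - x) * c) - (takagi u - takagi x - (u - x) * c)|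
        ≤ |takagi v - takagi x - (v - x) * c| + |takagi u - takagi x - (u - x) * c| := habs
      _ ≤ 4⁻¹ * |v - x| + 4⁻¹ * |u - x| := add_le_add hBv hBu
      _ = 4⁻¹ * (v - x + (x - u)) := by rw [h3, h4]; ring
      _ = 4⁻¹ * (2 ^ N)⁻¹ := by rw [h5]
  have e2 : takagi v - takagi u - (v - u) * c = ((Dx x N : ℝ) - c) * (2 ^ N)⁻¹ := by
    have hvu : v - u = (2 ^ N)⁻¹ := by rw [hv]; ring
    rw [hvu, hTv, div_eq_mul_inv]
    ring
  rw [e2, abs_mul, abs_of_pos hinv] at est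
  exact le_of_mul_le_mul_right (by linarith) hinv

lemma takagi_not_differentiableAt (x : ℝ) : ¬ DifferentiableAt ℝ takagi x := by
  intro h
  have hd : HasDerivAt takagi (deriv takagi x) x := h.hasDerivAt
  set c := deriv takagi x with hc
  have hlo := hasDerivAt_iff_isLittleO.mp hd
  have hb := hlo.def (by norm_num : (0:ℝ) < 4⁻¹)
  rw [Metric.eventually_nhds_iff] at hb
  obtain ⟨δ, hδ, hB⟩ := hb
  have hB' : ∀ y : ℝ, dist y x < δ →
      ‖takagi y - takagi x - (y - x) • c‖ ≤ 4⁻¹ * ‖y - x‖ := fun y hy => hB hy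
  obtain ⟨N, hN⟩ : ∃ N : ℕ, ((2:ℝ) ^ N)⁻¹ < δ := by
    obtain ⟨N, hN⟩ := exists_pow_lt_of_lt_one hδ (by norm_num : (1:ℝ) / 2 < 1)
    exact ⟨N, by rwa [one_div, inv_pow] at hN⟩
  have hmono : ((2:ℝ) ^ (N + 1))⁻¹ ≤ ((2:ℝ) ^ N)⁻¹ := by
    gcongr
    · norm_num
    · omega
  have b1 := key_bound x c hB' N hN
  have b2 := key_bound x c hB' (N + 1) (lt_of_le_of_lt hmono hN)
  have hone := abs_Dx_succ_sub x N
  have hle : |(Dx x (N + 1) : ℝ) - Dx x N| ≤ 1 / 2 := by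
    have e : (Dx x (N + 1) : ℝ) - Dx x N
        = ((Dx x (N + 1) : ℝ) - c) - ((Dx x N : ℝ) - c) := by ring
    rw [e, sub_eq_add_neg]
    refine (abs_add_le _ _).trans ?_
    rw [abs_neg]
    linarith
  rw [hone] at hle
  norm_num at hle

end TakagiAux

/-- The Takagi function has infinite total variation on every nondegenerate
subinterval of `[0,1]`. -/
theorem takagi_infinite_variation :
    ∀ a b : ℝ, 0 ≤ a → a < b → b ≤ 1 → eVariationOn takagi (Set.Icc a b) = ⊤ := by
  intro a b ha hab hb
  by_contra h
  have hbv : LocallyBoundedVariationOn takagi (Set.Icc a b) :=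
    BoundedVariationOn.locallyBoundedVariationOn h
  have hae := hbv.ae_differentiableWithinAt_of_mem_real
  have hsub : Set.Ioo a b ⊆
      {x : ℝ | ¬ (x ∈ Set.Icc a b → DifferentiableWithinAt ℝ takagi (Set.Icc a b) x)} := by
    intro x hx hP
    exact TakagiAux.takagi_not_differentiableAt x
      ((hP ⟨hx.1.le, hx.2.le⟩).differentiableAt (Icc_mem_nhds hx.1 hx.2))
  have h0 : MeasureTheory.volume (Set.Ioo a b) = 0 :=
    MeasureTheory.measure_mono_null hsub (MeasureTheory.ae_iff.mp hae)
  rw [Real.volume_Ioo] at h0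
  have hba : b - a ≤ 0 := ENNReal.ofReal_eq_zero.mp h0
  linarith
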